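/- For the construction of Theorem 4.4 (class H = {h_{i,j}} of row-initial-segments on ℕ×ℕ and the step-counting perturbation type U), there is no computable strong-realizable robust ERM oracle for (H,U): no total computable procedure can, on every robustly realizable sample output h ∈ H with zero empirical robust risk, and on every robustly non-realizable sample halt and report non-realizability. In fact, deciding whether the single-point sample {((i,0),1)} is robustly realizable by H is equivalent to deciding whether T_i halts on the empty input. -/

import Mathlib

open Nat.Partrec (Code)

/-- `T_i` halts within `k` steps on the empty input. -/
def haltsWithin (i k : ℕ) : Prop :=
  (Nat.Partrec.Code.evaln k (Denumerable.ofNat Code i) 0).isSome = true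

/-- The row-initial-segment hypothesis `h_{i,j}` on `ℕ × ℕ`. -/
def hRow (i j : ℕ) (x : ℕ × ℕ) : Bool := decide (x.1 = i ∧ x.2 ≤ j)

instance (i k : ℕ) : Decidable (haltsWithin i k) := by
  unfold haltsWithin; infer_instance

/-- The step-counting perturbation type of Theorem 4.4. -/
def Ustep : ℕ × ℕ → Set (ℕ × ℕ)
  | (i, 0) => {(i, 0)} ∪ {q | ∃ k, q = (i, k) ∧ ¬ haltsWithin i k}
  | (i, j + 1) =>
    if haltsWithin i (j + 1) then {(i, j + 1)} else {(i, j + 1), (i, 0)}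

/-- The robust loss of hypothesis `f` on `(x,y)` with respect to `U`. -/
def RobLoss {α : Type*} (U : α → Set α) (f : α → Bool) (x : α) (y : Bool) : Prop :=
  ∃ z ∈ U x, f z ≠ y

lemma haltsWithin_mono {i k k' : ℕ} (h : k ≤ k') (hk : haltsWithin i k) :
    haltsWithin i k' := by
  unfold haltsWithin at *
  obtain ⟨x, hx⟩ := Option.isSome_iff_exists.1 hk
  exact Option.isSome_iff_exists.2 ⟨x, Nat.Partrec.Code.evaln_mono h hx⟩

lemma key (i : ℕ) :
    (∃ a b : ℕ, ¬ RobLoss Ustep (hRow a b) (i, 0) true) ↔ ∃ k, haltsWithin i k := by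
  constructor
  · rintro ⟨a, b, h⟩
    by_contra hno
    push_neg at hno
    apply h
    refine ⟨(i, b + 1), ?_, ?_⟩
    · exact Or.inr ⟨b + 1, rfl, hno _⟩
    · simp [hRow]
  · rintro ⟨k, hk⟩
    refine ⟨i, k, ?_⟩
    rintro ⟨z, hz, hne⟩
    rcases hz with h0 | ⟨m, rfl, hm⟩
    · apply hne
      simp_all [hRow, Set.mem_singleton_iff.1 h0]
    · have hmk : m ≤ k := by
        by_contra hlt
        exact hm (haltsWithin_mono (le_of_not_ge hlt) hk)
      exact hne (by simp [hRow, hmk])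

lemma halts_iff (c : Code) :
    (c.eval 0).Dom ↔ ∃ k, haltsWithin (Encodable.encode c) k := by
  rw [Part.dom_iff_mem]
  constructor
  · rintro ⟨x, hx⟩
    obtain ⟨k, hk⟩ := Nat.Partrec.Code.evaln_complete.1 hx
    exact ⟨k, by unfold haltsWithin; simp [Denumerable.ofNat_encode]
                 exact Option.isSome_iff_exists.2 ⟨x, hk⟩⟩
  · rintro ⟨k, hk⟩
    unfold haltsWithin at hk
    rw [Denumerable.ofNat_encode] at hk
    obtain ⟨x, hx⟩ := Option.isSome_iff_exists.1 hk
    exact ⟨x, Nat.Partrec.Code.evaln_complete.2 ⟨k, hx⟩⟩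

/-- For the construction of Theorem 4.4, there is no computable strong-realizable
robust ERM oracle for `(H,U)`: no total computable procedure that, on every robustly
realizable sample, outputs (the index `(a,b)` of) a hypothesis `h_{a,b} ∈ H` with
zero empirical robust risk, and on every robustly non-realizable sample halts and
reports non-realizability (`none`). In fact, the single-point sample `{((i,0),1)}`
is robustly realizable by `H` if and only if `T_i` halts on the empty input. -/
theorem no_strong_realizable_RERM :
    (¬ ∃ F : List ((ℕ × ℕ) × Bool) → Option (ℕ × ℕ), Computable F ∧
      ∀ S : List ((ℕ × ℕ) × Bool),
        ((∃ a b : ℕ, ∀ p ∈ S, ¬ RobLoss Ustep (hRow a b) p.1 p.2) →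
          ∃ a b : ℕ, F S = some (a, b) ∧ ∀ p ∈ S, ¬ RobLoss Ustep (hRow a b) p.1 p.2) ∧
        ((¬ ∃ a b : ℕ, ∀ p ∈ S, ¬ RobLoss Ustep (hRow a b) p.1 p.2) → F S = none)) ∧
    (∀ i : ℕ,
      (∃ a b : ℕ, ¬ RobLoss Ustep (hRow a b) (i, 0) true) ↔ ∃ k, haltsWithin i k) := by
  refine ⟨?_, key⟩
  rintro ⟨F, hF, hspec⟩
  apply ComputablePred.halting_problem 0
  rw [ComputablePred.computable_iff]
  refine ⟨fun c => (F [((Encodable.encode c, 0), true)]).isSome, ?_, ?_⟩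
  · exact (Primrec.option_isSome.to_comp).comp
      (hF.comp ((Computable.list_cons).comp
        (((Computable.encode.pair (Computable.const 0)).pair (Computable.const true)))
        (Computable.const [])))
  · funext c
    set S : List ((ℕ × ℕ) × Bool) := [((Encodable.encode c, 0), true)]
    have hS : (∃ a b : ℕ, ∀ p ∈ S, ¬ RobLoss Ustep (hRow a b) p.1 p.2) ↔
        (c.eval 0).Dom := by
      rw [halts_iff, ← key]
      constructor
      · rintro ⟨a, b, h⟩; exact ⟨a, b, h ((Encodable.encode c, 0), true) (List.mem_singleton.2 rfl)⟩
      · rintro ⟨a, b, h⟩; exact ⟨a, b, by rintro p hp; simp [S] at hp; subst hp; exact h⟩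
    apply propext
    constructor
    · intro hdom
      obtain ⟨a, b, hFS, _⟩ := (hspec S).1 (hS.2 hdom)
      simp [show F [((Encodable.encode c, 0), true)] = some (a, b) from hFS]
    · intro hsome
      by_contra hdom
      have := (hspec S).2 (fun h => hdom (hS.1 h))
      simp [show F [((Encodable.encode c, 0), true)] = none from this] at hsome
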